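/- Parity-game correspondence: let P = (V, V_0, V_1, E, p, v_0) be a finite parity game with priorities in {0, …, n}, let f_0 be a positional strategy for Player 0, and let K_{P,f_0} be the Kripke structure obtained by projecting f_0 on the arena (worlds V, initial world v_0, transitions f_0 ∪ (E ∩ (V_1 × V)), each world w labeled by the single proposition p(w) from AP = {0, …, n}). Then f_0 is winning for Player 0 under the parity condition (every play consistent with f_0 from v_0 is won by Player 0) if and only if K_{P,f_0}, v_0 ⊨ φ^par, where φ^par = A(⋁_{k even} (G F k ∧ ⋀_{l ≥ k, l odd} F G ¬l)). -/

import Mathlib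

namespace CycleCTL

universe u v

/-- A Kripke structure over a set `AP` of atomic propositions. -/
structure Kripke (AP : Type) : Type (u + 1) where
  World : Type u
  init : World
  R : World → World → Prop
  label : World → Set AP
  serial : ∀ w, ∃ v, R w v

variable {AP : Type}

/-- An (infinite) path of a Kripke structure. -/
def IsPath (K : Kripke.{u} AP) (π : ℕ → K.World) : Prop :=
  ∀ i, K.R (π i) (π (i + 1))

/-- A cycle: a path visiting its first world infinitely often. -/
def IsCycle (K : Kripke.{u} AP) (π : ℕ → K.World) : Prop :=
  IsPath K π ∧ ∀ i, ∃ j, i < j ∧ π j = π 0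

mutual
  /-- State formulas of Cycle-CTL*. -/
  inductive StateForm (AP : Type) : Type where
    | atom : AP → StateForm AP
    | not  : StateForm AP → StateForm AP
    | and  : StateForm AP → StateForm AP → StateForm AP
    | or   : StateForm AP → StateForm AP → StateForm AP
    | E    : PathForm AP → StateForm AP
    | A    : PathForm AP → StateForm AP
    | Ec   : PathForm AP → StateForm AP
    | Ac   : PathForm AP → StateForm AP
  /-- Path formulas of Cycle-CTL*. -/
  inductive PathForm (AP : Type) : Type where
    | state : StateForm AP → PathForm AP
    | not   : PathForm AP → PathForm AP
    | and   : PathForm AP → PathForm AP → PathForm AP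
    | or    : PathForm AP → PathForm AP → PathForm AP
    | next  : PathForm AP → PathForm AP
    | untl  : PathForm AP → PathForm AP → PathForm AP
end

mutual
  /-- Satisfaction of a state formula at a world. -/
  def SatS (K : Kripke.{u} AP) : K.World → StateForm AP → Prop
    | w, .atom p => p ∈ K.label w
    | w, .not φ => ¬ SatS K w φ
    | w, .and φ₁ φ₂ => SatS K w φ₁ ∧ SatS K w φ₂
    | w, .or φ₁ φ₂ => SatS K w φ₁ ∨ SatS K w φ₂
    | w, .E ψ => ∃ π, IsPath K π ∧ π 0 = w ∧ SatP K π 0 ψ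
    | w, .A ψ => ∀ π, IsPath K π → π 0 = w → SatP K π 0 ψ
    | w, .Ec ψ => ∃ π, IsCycle K π ∧ π 0 = w ∧ SatP K π 0 ψ
    | w, .Ac ψ => ∀ π, IsCycle K π → π 0 = w → SatP K π 0 ψ
  /-- Satisfaction of a path formula on a path at a position. -/
  def SatP (K : Kripke.{u} AP) : (ℕ → K.World) → ℕ → PathForm AP → Prop
    | π, i, .state φ => SatS K (π i) φ
    | π, i, .not ψ => ¬ SatP K π i ψ
    | π, i, .and ψ₁ ψ₂ => SatP K π i ψ₁ ∧ SatP K π i ψ₂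
    | π, i, .or ψ₁ ψ₂ => SatP K π i ψ₁ ∨ SatP K π i ψ₂
    | π, i, .next ψ => SatP K π (i + 1) ψ
    | π, i, .untl ψ₁ ψ₂ => ∃ k, SatP K π (i + k) ψ₂ ∧ ∀ j < k, SatP K π (i + j) ψ₁
end

/-- `K ⊨ φ` : satisfaction at the initial world. -/
def Sat (K : Kripke.{u} AP) (φ : StateForm AP) : Prop := SatS K K.init φ

/-- `⊤` as a path formula, abbreviating `p ∨ ¬p`. -/
def topP (p : AP) : PathForm AP := .or (.state (.atom p)) (.not (.state (.atom p)))

/-- `F ψ` abbreviates `⊤ U ψ`. -/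
def FP (p : AP) (ψ : PathForm AP) : PathForm AP := .untl (topP p) ψ

/-- `G ψ` abbreviates `¬(⊤ U ¬ψ)`. -/
def GP (p : AP) (ψ : PathForm AP) : PathForm AP := .not (FP p (.not ψ))


/-- Big disjunction of a list of path formulas (empty disjunction is `⊥ = ¬⊤`). -/
def bigOrP (p : AP) (l : List (PathForm AP)) : PathForm AP :=
  l.foldr .or (.not (topP p))

/-- Big conjunction of a list of path formulas (empty conjunction is `⊤`). -/
def bigAndP (p : AP) (l : List (PathForm AP)) : PathForm AP :=
  l.foldr .and (topP p)

/-- The formula `φ^par = A (⋁_{k ≤ n even} (G F k ∧ ⋀_{k ≤ l ≤ n, l odd} F G ¬l))` over the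
atomic propositions `AP = ℕ` (priorities). -/
def phiPar (n : ℕ) : StateForm ℕ :=
  .A (bigOrP 0 ((((List.range (n + 1)).filter (fun k => decide (Even k)))).map (fun k =>
    .and (GP 0 (FP 0 (.state (.atom k))))
      (bigAndP 0 (((List.range (n + 1)).filter
          (fun l => decide (k ≤ l ∧ Odd l))).map (fun l =>
        FP 0 (GP 0 (.not (.state (.atom l))))))))))


section
variable {K : Kripke.{u} AP} {π : ℕ → K.World} {i : ℕ} {p : AP}

lemma satP_top : SatP K π i (topP p) := by
  simp only [topP, SatP]; exact em _

lemma satP_F {ψ : PathForm AP} : SatP K π i (FP p ψ) ↔ ∃ k, SatP K π (i + k) ψ := by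
  simp only [FP, SatP]
  exact ⟨fun ⟨k, h, _⟩ => ⟨k, h⟩, fun ⟨k, h⟩ => ⟨k, h, fun _ _ => satP_top⟩⟩

lemma satP_state {φ : StateForm AP} : SatP K π i (.state φ) ↔ SatS K (π i) φ := by
  simp [SatP]

lemma satP_and {ψ₁ ψ₂ : PathForm AP} :
    SatP K π i (.and ψ₁ ψ₂) ↔ SatP K π i ψ₁ ∧ SatP K π i ψ₂ := by
  simp [SatP]

lemma satP_not {ψ : PathForm AP} : SatP K π i (.not ψ) ↔ ¬ SatP K π i ψ := by
  simp [SatP]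

lemma satP_G {ψ : PathForm AP} : SatP K π i (GP p ψ) ↔ ∀ k, SatP K π (i + k) ψ := by
  rw [GP, satP_not, satP_F]
  push_neg
  simp [satP_not]

lemma satP_bigOr {l : List (PathForm AP)} :
    SatP K π i (bigOrP p l) ↔ ∃ ψ ∈ l, SatP K π i ψ := by
  induction l with
  | nil => simp only [bigOrP, List.foldr, SatP]; simp [satP_top (p := p)]
  | cons a t ih =>
    simp only [bigOrP, List.foldr, SatP] at *
    simp [ih]

lemma satP_bigAnd {l : List (PathForm AP)} :
    SatP K π i (bigAndP p l) ↔ ∀ ψ ∈ l, SatP K π i ψ := by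
  induction l with
  | nil => simp [bigAndP, satP_top (p := p)]
  | cons a t ih =>
    simp only [bigAndP, List.foldr, SatP] at *
    simp [ih]

end
/-- `π` is a play of the game from `v₀` consistent with the positional strategy `f₀` of
Player 0: at Player-0 states the strategy is followed, at Player-1 states any edge is taken. -/
def IsPlay {V : Type u} (P₀ : V → Prop) (E : V → V → Prop) (f₀ : V → V)
    (v₀ : V) (π : ℕ → V) : Prop :=
  π 0 = v₀ ∧
  ∀ i, (P₀ (π i) → π (i + 1) = f₀ (π i)) ∧ (¬ P₀ (π i) → E (π i) (π (i + 1)))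

/-- Priority `k` occurs infinitely often along `π`. -/
def InfOften {V : Type u} (pf : V → ℕ) (π : ℕ → V) (k : ℕ) : Prop :=
  ∀ N, ∃ i, N ≤ i ∧ pf (π i) = k

/-- Player 0 wins the play `π` under the parity condition: the maximum priority occurring
infinitely often along `π` is even. -/
def Win0 {V : Type u} (pf : V → ℕ) (π : ℕ → V) : Prop :=
  ∃ k, Even k ∧ InfOften pf π k ∧ ∀ l, InfOften pf π l → l ≤ k

/-- The Kripke structure `K_{P,f₀}` obtained by projecting the positional strategy `f₀` of
Player 0 on the arena: worlds `V`, initial world `v₀`, transitions `f₀ ∪ (E ∩ (V₁ × V))`,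
each world labeled by its priority. -/
def gameK (V : Type u) (P₀ : V → Prop) (E : V → V → Prop) (hE : ∀ v, ∃ u, E v u)
    (pf : V → ℕ) (v₀ : V) (f₀ : V → V) : Kripke.{u} ℕ where
  World := V
  init := v₀
  R := fun w v => (P₀ w ∧ v = f₀ w) ∨ (¬ P₀ w ∧ E w v)
  label := fun w => {pf w}
  serial := fun w => by
    classical
    by_cases h : P₀ w
    · exact ⟨f₀ w, Or.inl ⟨h, rfl⟩⟩
    · obtain ⟨u, hu⟩ := hE w
      exact ⟨u, Or.inr ⟨h, hu⟩⟩

/-- for a finite parity game with priorities in `{0, …, n}` and a positional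
strategy `f₀` for Player 0, `f₀` is winning for Player 0 under the parity condition iff
`K_{P,f₀}, v₀ ⊨ φ^par`. -/
theorem stmt18 (V : Type u) [Finite V] [Nonempty V]
    (P₀ : V → Prop) (E : V → V → Prop) (hE : ∀ v, ∃ u, E v u)
    (pf : V → ℕ) (n : ℕ) (hp : ∀ v, pf v ≤ n)
    (v₀ : V) (f₀ : V → V) (hf₀ : ∀ v, P₀ v → E v (f₀ v)) :
    (∀ π : ℕ → V, IsPlay P₀ E f₀ v₀ π → Win0 pf π) ↔
      SatS (gameK V P₀ E hE pf v₀ f₀) v₀ (phiPar n) := by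
  classical
  set K := gameK V P₀ E hE pf v₀ f₀ with hK
  have hplay : ∀ π : ℕ → V, IsPlay P₀ E f₀ v₀ π ↔ (IsPath K π ∧ π 0 = v₀) := by
    intro π
    constructor
    · rintro ⟨h0, hs⟩
      refine ⟨fun i => ?_, h0⟩
      by_cases h : P₀ (π i)
      · exact Or.inl ⟨h, (hs i).1 h⟩
      · exact Or.inr ⟨h, (hs i).2 h⟩
    · rintro ⟨hp, h0⟩
      refine ⟨h0, fun i => ⟨fun h => ?_, fun h => ?_⟩⟩
      · rcases hp i with ⟨_, h2⟩ | ⟨h1, _⟩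
        · exact h2
        · exact absurd h h1
      · rcases hp i with ⟨h1, _⟩ | ⟨_, h2⟩
        · exact absurd h1 h
        · exact h2
  have hatom : ∀ (w : V) (k : ℕ), SatS K w (.atom k) ↔ pf w = k := by
    intro w k
    simp only [SatS]
    show k ∈ ({pf w} : Set ℕ) ↔ pf w = k
    simp [eq_comm]
  have hinf : ∀ (π : ℕ → V) (k : ℕ),
      InfOften pf π k ↔ ∀ j : ℕ, ∃ m : ℕ, pf (π (j + m)) = k := by
    intro π k
    constructor
    · intro h j
      obtain ⟨i, hji, hi⟩ := h j
      exact ⟨i - j, by rwa [Nat.add_sub_cancel' hji]⟩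
    · intro h N
      obtain ⟨m, hm⟩ := h N
      exact ⟨N + m, Nat.le_add_right _ _, hm⟩
  have hninf : ∀ (π : ℕ → V) (l : ℕ),
      ¬ InfOften pf π l ↔ ∃ j : ℕ, ∀ m : ℕ, pf (π (j + m)) ≠ l := by
    intro π l
    rw [InfOften]
    push_neg
    constructor
    · rintro ⟨N, hN⟩
      exact ⟨N, fun m => hN (N + m) (Nat.le_add_right _ _)⟩
    · rintro ⟨j, hj⟩
      refine ⟨j, fun i hi => ?_⟩
      have := hj (i - j)
      rwa [Nat.add_sub_cancel' hi] at this
  have hbody : ∀ π : ℕ → V, SatP K π 0 (bigOrP 0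
      ((((List.range (n + 1)).filter (fun k => decide (Even k)))).map (fun k =>
        .and (GP 0 (FP 0 (.state (.atom k))))
          (bigAndP 0 (((List.range (n + 1)).filter
              (fun l => decide (k ≤ l ∧ Odd l))).map (fun l =>
            FP 0 (GP 0 (.not (.state (.atom l)))))))))) ↔
      ∃ k, k ≤ n ∧ Even k ∧ InfOften pf π k ∧
        ∀ l, k ≤ l → l ≤ n → Odd l → ¬ InfOften pf π l := by
    intro π
    erw [satP_bigOr]
    simp only [List.mem_map, List.mem_filter, List.mem_range, Nat.lt_succ_iff,
      decide_eq_true_eq]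
    constructor
    · rintro ⟨ψ, ⟨k, ⟨hkn, hke⟩, rfl⟩, hsat⟩
      erw [satP_and] at hsat
      obtain ⟨hGF, hFG⟩ := hsat
      refine ⟨k, hkn, hke, ?_, ?_⟩
      · rw [hinf]
        intro j
        erw [satP_G] at hGF
        have := hGF j
        erw [satP_F] at this
        obtain ⟨m, hm⟩ := this
        erw [satP_state, hatom] at hm
        exact ⟨m, by simpa using hm⟩
      · intro l hkl hln hlo
        erw [satP_bigAnd] at hFG
        have := hFG _ (List.mem_map.mpr ⟨l, List.mem_filter.mpr
          ⟨List.mem_range.mpr (Nat.lt_succ_of_le hln), by simp [hkl, hlo]⟩, rfl⟩)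
        erw [satP_F] at this
        obtain ⟨j, hj⟩ := this
        erw [satP_G] at hj
        rw [hninf]
        refine ⟨j, fun m => ?_⟩
        have := hj m
        erw [satP_not, satP_state, hatom] at this
        simpa using this
    · rintro ⟨k, hkn, hke, hik, hfin⟩
      refine ⟨_, ⟨k, ⟨hkn, hke⟩, rfl⟩, ?_⟩
      erw [satP_and]
      constructor
      · erw [satP_G]
        intro j
        erw [satP_F]
        rw [hinf] at hik
        obtain ⟨m, hm⟩ := hik j
        exact ⟨m, by erw [satP_state, hatom]; simpa using hm⟩
      · erw [satP_bigAnd]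
        intro ψ hψ
        obtain ⟨l, hl, rfl⟩ := List.mem_map.mp hψ
        obtain ⟨hl1, hl2⟩ := List.mem_filter.mp hl
        rw [decide_eq_true_eq] at hl2
        have hfl := hfin l hl2.1 (Nat.lt_succ_iff.mp (List.mem_range.mp hl1)) hl2.2
        rw [hninf] at hfl
        obtain ⟨j, hj⟩ := hfl
        erw [satP_F]
        refine ⟨j, ?_⟩
        erw [satP_G]
        intro m
        erw [satP_not, satP_state, hatom]
        simpa using hj m
  have hwin : ∀ π : ℕ → V, Win0 pf π ↔
      ∃ k, k ≤ n ∧ Even k ∧ InfOften pf π k ∧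
        ∀ l, k ≤ l → l ≤ n → Odd l → ¬ InfOften pf π l := by
    intro π
    constructor
    · rintro ⟨k, hke, hik, hmax⟩
      obtain ⟨i, _, hi⟩ := hik 0
      refine ⟨k, hi ▸ hp (π i), hke, hik, fun l hkl _ hlo hil => ?_⟩
      have := le_antisymm (hmax l hil) hkl
      exact (Nat.not_odd_iff_even.mpr hke) (this ▸ hlo)
    · rintro ⟨k, hkn, hke, hik, hfin⟩
      set m := Nat.findGreatest (InfOften pf π) n with hm
      have hPm : InfOften pf π m := Nat.findGreatest_spec hkn hik
      have hmax : ∀ l, InfOften pf π l → l ≤ m := by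
        intro l hil
        obtain ⟨i, _, hi⟩ := hil 0
        have hln : l ≤ n := hi ▸ hp (π i)
        by_contra hc
        exact Nat.findGreatest_is_greatest (Nat.lt_of_not_le hc) hln hil
      have hme : Even m := by
        by_contra ho
        have hmo : Odd m := Nat.not_even_iff_odd.mp ho
        exact hfin m (Nat.le_findGreatest hkn hik) (Nat.findGreatest_le n) hmo hPm
      exact ⟨m, hme, hPm, hmax⟩
  rw [phiPar]
  show _ ↔ SatS K v₀ _
  simp only [SatS]
  constructor
  · intro h π hpath h0
    exact (hbody π).mpr ((hwin π).mp (h π ((hplay π).mpr ⟨hpath, h0⟩)))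
  · intro h π hpl
    obtain ⟨hpath, h0⟩ := (hplay π).mp hpl
    exact (hwin π).mpr ((hbody π).mp (h π hpath h0))

end CycleCTL
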